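/- Let p be an odd prime. Then the projective special linear group PSL(2, 𝔽_p) contains a metacyclic subgroup which is a semidirect product ℤ/p ⋊ ℤ/((p-1)/2) with a faithful action: there exist an injective group homomorphism φ from the cyclic group ℤ/((p-1)/2) into the automorphism group of the additive group ℤ/p, and an injective group homomorphism from the semidirect product (ℤ/p) ⋊_φ (ℤ/((p-1)/2)) into PSL(2, 𝔽_p). -/

import Mathlib

section aux

variable {R : Type*} [CommRing R]

/-- Unipotent upper triangular matrices as a hom into `SL(2,R)`. -/
def upperU : Multiplicative R →* Matrix.SpecialLinearGroup (Fin 2) R where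
  toFun b := ⟨!![1, b.toAdd; 0, 1], by simp [Matrix.det_fin_two_of]⟩
  map_one' := by
    apply Subtype.ext
    simp [Matrix.one_fin_two]
  map_mul' a b := by
    apply Subtype.ext
    show _ = !![1, a.toAdd; 0, 1] * !![1, b.toAdd; 0, 1]
    simp [Matrix.mul_fin_two, add_comm]

/-- Diagonal matrices as a hom from units into `SL(2,R)`. -/
def diagD : Rˣ →* Matrix.SpecialLinearGroup (Fin 2) R where
  toFun u := ⟨!![(u : R), 0; 0, ((u⁻¹ : Rˣ) : R)], by
    simp [Matrix.det_fin_two_of]⟩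
  map_one' := by
    apply Subtype.ext
    simp [Matrix.one_fin_two]
  map_mul' a b := by
    apply Subtype.ext
    show _ = !![(a : R), 0; 0, ((a⁻¹ : Rˣ) : R)] * !![(b : R), 0; 0, ((b⁻¹ : Rˣ) : R)]
    simp [Matrix.mul_fin_two, mul_comm]

lemma diagD_conj_upperU (u : Rˣ) (b : Multiplicative R) :
    diagD u * upperU b * (diagD u)⁻¹ =
      upperU (Multiplicative.ofAdd ((u : R) ^ 2 * b.toAdd)) := by
  rw [← map_inv]
  apply Subtype.ext
  show (!![(u : R), 0; 0, ((u⁻¹ : Rˣ) : R)] * !![1, b.toAdd; 0, 1]) *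
      !![((u⁻¹ : Rˣ) : R), 0; 0, (((u⁻¹)⁻¹ : Rˣ) : R)] = _
  have h1 : (u : R) * ((u⁻¹ : Rˣ) : R) = 1 := by exact_mod_cast u.mul_inv
  have h2 : ((u⁻¹ : Rˣ) : R) * (u : R) = 1 := by exact_mod_cast u.inv_mul
  simp [Matrix.mul_fin_two, upperU, inv_inv, h1, h2]
  show _ = !![1, (u : R) ^ 2 * b.toAdd; 0, 1]
  ring_nf

/-- `AddAut A` is multiplicatively isomorphic to `MulAut (Multiplicative A)`. -/
def addAutToMulAut {A : Type*} [AddGroup A] : Multiplicative (AddAut A) ≃* MulAut (Multiplicative A) where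
  toFun f := AddEquiv.toMultiplicative f
  invFun f := AddEquiv.toMultiplicative.symm f
  left_inv f := by ext; rfl
  right_inv f := by ext; rfl
  map_mul' f g := by ext; rfl


/-- The hom `ZMod q → G`, `n ↦ h ^ n.val`, for `h` of order dividing `q`. -/
def zmodPowHom {G : Type*} [Group G] (q : ℕ) [NeZero q] (h : G) (hh : h ^ q = 1) :
    Multiplicative (ZMod q) →* G where
  toFun n := h ^ (Multiplicative.toAdd n).val
  map_one' := by simp
  map_mul' a b := by
    have key : ∀ m : ℕ, h ^ (m % q) = h ^ m := fun m => by
      conv_rhs => rw [← Nat.div_add_mod m q]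
      rw [pow_add, pow_mul, hh, one_pow, one_mul]
    show h ^ (Multiplicative.toAdd a + Multiplicative.toAdd b).val = _
    rw [ZMod.val_add, key, pow_add]

lemma zmodPowHom_injective {G : Type*} [Group G] (q : ℕ) [NeZero q] (h : G)
    (hh : h ^ q = 1) (ho : orderOf h = q) :
    Function.Injective (zmodPowHom q h hh) := by
  rw [injective_iff_map_eq_one]
  intro a ha
  have ha' : h ^ (Multiplicative.toAdd a).val = 1 := ha
  have hdvd := orderOf_dvd_of_pow_eq_one ha'
  rw [ho] at hdvd
  have hlt : (Multiplicative.toAdd a).val < q := ZMod.val_lt _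
  have h0 : (Multiplicative.toAdd a).val = 0 := Nat.eq_zero_of_dvd_of_lt hdvd hlt
  have : Multiplicative.toAdd a = 0 := (ZMod.val_eq_zero _).mp h0
  simpa using this

end aux

/-- The projective special linear group `PSL(n, F)`: the quotient of `SL(n, F)` by its center. -/
abbrev PSL (n : ℕ) (F : Type) [Field F] :=
  Matrix.SpecialLinearGroup (Fin n) F ⧸ Subgroup.center (Matrix.SpecialLinearGroup (Fin n) F)

/-- For an odd prime `p`, the group `PSL(2, 𝔽_p)` contains a metacyclic subgroup which is a
semidirect product `ℤ/p ⋊ ℤ/((p-1)/2)` with a faithful action. -/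
theorem psl_two_contains_metacyclic (p : ℕ) [Fact p.Prime] (hp : Odd p) :
    ∃ (φ : Multiplicative (ZMod ((p - 1) / 2)) →* MulAut (Multiplicative (ZMod p)))
      (ψ : (Multiplicative (ZMod p)) ⋊[φ] (Multiplicative (ZMod ((p - 1) / 2))) →*
        PSL 2 (ZMod p)),
      Function.Injective φ ∧ Function.Injective ψ := by
  have hpp : p.Prime := Fact.out
  have hodd : p % 2 = 1 := Nat.odd_iff.mp hp
  have hp2 : 2 ≤ p := hpp.two_le
  set q := (p - 1) / 2 with hqdef
  have h2q : 2 * q = p - 1 := by omega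
  have hq0 : q ≠ 0 := by omega
  haveI : NeZero q := ⟨hq0⟩
  obtain ⟨g, hg⟩ := IsCyclic.exists_generator (α := (ZMod p)ˣ)
  have hog : orderOf g = p - 1 := by
    rw [orderOf_eq_card_of_forall_mem_zpowers hg, Nat.card_eq_fintype_card, ZMod.card_units]
  -- the action hom
  have hgsq : (g ^ 2) ^ q = 1 := by
    rw [← pow_mul, h2q, ← hog, pow_orderOf_eq_one]
  have hosq : orderOf (g ^ 2) = q := by
    rw [orderOf_pow, hog, ← h2q, Nat.gcd_comm]
    rw [Nat.gcd_eq_left ⟨q, rfl⟩]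
    omega
  set χ := zmodPowHom q (g ^ 2) hgsq with hχdef
  set φ := (addAutToMulAut.toMonoidHom.comp (AddAut.mulLeft.comp χ) :
      Multiplicative (ZMod q) →* MulAut (Multiplicative (ZMod p))) with hφdef
  -- the quotient map
  set π := QuotientGroup.mk' (Subgroup.center (Matrix.SpecialLinearGroup (Fin 2) (ZMod p)))
    with hπdef
  set f₁ := π.comp (upperU (R := ZMod p)) with hf₁def
  -- g^q is -1
  have hgq2 : (g ^ q) ^ 2 = 1 := by
    rw [← pow_mul, mul_comm, h2q, ← hog, pow_orderOf_eq_one]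
  have hgqne : g ^ q ≠ 1 := by
    intro h
    have := orderOf_dvd_of_pow_eq_one h
    rw [hog] at this
    have := Nat.le_of_dvd (by omega) this
    omega
  have hxval : ((g ^ q : (ZMod p)ˣ) : ZMod p) = -1 := by
    set x := ((g ^ q : (ZMod p)ˣ) : ZMod p) with hxdef
    have hx2 : x ^ 2 = 1 := by
      rw [hxdef, ← Units.val_pow_eq_pow_val, hgq2, Units.val_one]
    have hx1 : x ≠ 1 := fun h => hgqne (Units.ext h)
    have hfac : (x - 1) * (x + 1) = 0 := by ring_nf; linear_combination hx2
    rcases mul_eq_zero.mp hfac with h | h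
    · exact absurd (by linear_combination h) hx1
    · linear_combination h
  have hcenter : diagD (g ^ q) ∈
      Subgroup.center (Matrix.SpecialLinearGroup (Fin 2) (ZMod p)) := by
    rw [Matrix.SpecialLinearGroup.mem_center_iff]
    refine ⟨-1, by norm_num, ?_⟩
    show _ = !![((g ^ q : (ZMod p)ˣ) : ZMod p), 0; 0, (((g ^ q)⁻¹ : (ZMod p)ˣ) : ZMod p)]
    have : (((g ^ q)⁻¹ : (ZMod p)ˣ) : ZMod p) = -1 := by
      rw [← inv_neg_one]
      rw [← hxval]
      exact (Units.val_inv_eq_inv_val _)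
    rw [hxval, this]
    ext i j
    fin_cases i <;> fin_cases j <;>
      simp [Matrix.scalar_apply, Matrix.diagonal]
  have ht : (π (diagD g)) ^ q = 1 := by
    rw [← map_pow, ← map_pow]
    exact (QuotientGroup.eq_one_iff _).mpr hcenter
  set f₂ := zmodPowHom q (π (diagD g)) ht with hf₂def
  -- compatibility
  have hcomp : ∀ n, f₁.comp (φ n).toMonoidHom =
      (MulAut.conj (f₂ n)).toMonoidHom.comp f₁ := by
    intro n
    refine MonoidHom.ext fun b => ?_
    set m := (Multiplicative.toAdd n).val with hmdef
    show π (upperU (φ n b)) = f₂ n * π (upperU b) * (f₂ n)⁻¹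
    have hf2n : f₂ n = π (diagD (g ^ m)) := by
      show (π (diagD g)) ^ m = _
      rw [← map_pow, ← map_pow]
    rw [hf2n, ← map_inv, ← map_mul, ← map_mul, diagD_conj_upperU]
    congr 1
    have hφnb : φ n b = Multiplicative.ofAdd
        ((((g ^ 2) ^ m : (ZMod p)ˣ) : ZMod p) * Multiplicative.toAdd b) := rfl
    rw [hφnb]
    congr 1
    push_cast
    ring
  set ψ := SemidirectProduct.lift f₁ f₂ hcomp with hψdef
  refine ⟨φ, ψ, ?_, ?_⟩
  · -- injectivity of φ
    have hχ : Function.Injective χ := zmodPowHom_injective q (g ^ 2) hgsq hosq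
    have hml : Function.Injective (AddAut.mulLeft (R := ZMod p)) := by
      intro u v huv
      have h2 : u • (1 : ZMod p) = v • 1 := congrArg (fun f : AddAut (ZMod p) => f 1) huv
      simp only [Units.smul_def, smul_eq_mul, mul_one] at h2
      exact Units.ext h2
    exact addAutToMulAut.injective.comp (hml.comp hχ)
  · -- injectivity of ψ
    rw [injective_iff_map_eq_one]
    intro x hx
    set m := (Multiplicative.toAdd x.right).val with hmdef
    have hxval' : ψ x = π (upperU x.left * diagD (g ^ m)) := by
      have h1 : ψ x = f₁ x.left * f₂ x.right := by
        conv_lhs => rw [← SemidirectProduct.inl_left_mul_inr_right x]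
        rw [map_mul, SemidirectProduct.lift_inl, SemidirectProduct.lift_inr]
      rw [h1, map_mul]
      refine congrArg₂ (· * ·) rfl ?_
      show (π (diagD g)) ^ m = _
      rw [← map_pow, ← map_pow]
    rw [hxval'] at hx
    have hmem := (QuotientGroup.eq_one_iff _).mp hx
    rw [Matrix.SpecialLinearGroup.mem_center_iff] at hmem
    obtain ⟨r, hr2, hscal⟩ := hmem
    have hmat : (↑(upperU x.left * diagD (g ^ m)) : Matrix (Fin 2) (Fin 2) (ZMod p)) =
        !![((g ^ m : (ZMod p)ˣ) : ZMod p),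
            Multiplicative.toAdd x.left * (((g ^ m)⁻¹ : (ZMod p)ˣ) : ZMod p); 0,
            (((g ^ m)⁻¹ : (ZMod p)ˣ) : ZMod p)] := by
      show (!![1, Multiplicative.toAdd x.left; 0, 1] *
        !![((g ^ m : (ZMod p)ˣ) : ZMod p), 0; 0, (((g ^ m)⁻¹ : (ZMod p)ˣ) : ZMod p)]) = _
      simp [Matrix.mul_fin_two]
    rw [hmat] at hscal
    have h01 : (0 : ZMod p) = Multiplicative.toAdd x.left * (((g ^ m)⁻¹ : (ZMod p)ˣ) : ZMod p) := by
      have := congr_fun (congr_fun hscal 0) 1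
      simpa [Matrix.scalar_apply, Matrix.diagonal] using this
    have h00 : r = ((g ^ m : (ZMod p)ˣ) : ZMod p) := by
      have := congr_fun (congr_fun hscal 0) 0
      simpa [Matrix.scalar_apply, Matrix.diagonal] using this
    have hb : Multiplicative.toAdd x.left = 0 := by
      have := h01.symm
      rcases mul_eq_zero.mp this with h | h
      · exact h
      · exact absurd h (Units.ne_zero _)
    have hu2 : (g ^ m) ^ 2 = (1 : (ZMod p)ˣ) := by
      apply Units.ext
      rw [Units.val_pow_eq_pow_val, ← h00]
      simpa using hr2
    have hm0 : m = 0 := by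
      rw [← pow_mul] at hu2
      have hdvd : p - 1 ∣ m * 2 := hog ▸ orderOf_dvd_of_pow_eq_one hu2
      have hlt : m < q := ZMod.val_lt _
      have := Nat.eq_zero_of_dvd_of_lt hdvd (by omega)
      omega
    -- conclude x = 1
    have hleft : x.left = 1 := by
      have : x.left = Multiplicative.ofAdd (Multiplicative.toAdd x.left) := rfl
      rw [this, hb]; rfl
    have hright : x.right = 1 := by
      have : (Multiplicative.toAdd x.right) = 0 := (ZMod.val_eq_zero _).mp hm0
      have h2 : x.right = Multiplicative.ofAdd (Multiplicative.toAdd x.right) := rfl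
      rw [h2, this]; rfl
    rw [← SemidirectProduct.inl_left_mul_inr_right x, hleft, hright]
    simp
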